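/- If ⪯ is a well-quasi-ordering on a set C, then the induced ordering ⪯_m on finite multisets over C is a well-quasi-ordering, where B ⪯_m B' iff there is an injection h from the elements of B (with multiplicity) into the elements of B' such that each element is mapped to a ⪯-larger element. -/

import Mathlib

/-- A relation is a well-quasi-ordering if it is a preorder (reflexive and
transitive) and every infinite sequence has indices `i < j` with
`r (f i) (f j)`. -/
def IsWQO {α : Type*} (r : α → α → Prop) : Prop :=
  Reflexive r ∧ Transitive r ∧ ∀ f : ℕ → α, ∃ i j, i < j ∧ r (f i) (f j)

/-- The multiset embedding: `B ⪯_m B'` iff there is an injection of the elements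
of `B` (with multiplicity) into those of `B'` mapping each element to an
`r`-larger one; equivalently, some sub-multiset of `B'` is related to `B`
elementwise by `r`. -/
def MultisetEmb {α : Type*} (r : α → α → Prop) (B B' : Multiset α) : Prop :=
  ∃ t ≤ B', Multiset.Rel r B t

private lemma forall₂_to_rel {α : Type*} {r : α → α → Prop} :
    ∀ {l₁ l₂ : List α}, List.Forall₂ r l₁ l₂ → Multiset.Rel r ↑l₁ ↑l₂
  | _, _, List.Forall₂.nil => Multiset.Rel.zero
  | _, _, List.Forall₂.cons h hs => by
      rw [← Multiset.cons_coe, ← Multiset.cons_coe]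
      exact Multiset.Rel.cons h (forall₂_to_rel hs)

/-- If `r` is a WQO then the multiset embedding `r`-ordering is a WQO. -/
theorem isWQO_multisetEmb {α : Type*} (r : α → α → Prop) (h : IsWQO r) :
    IsWQO (MultisetEmb r) := by
  obtain ⟨hr, ht, hseq⟩ := h
  haveI : IsRefl α r := ⟨hr⟩
  haveI : IsTrans α r := ⟨fun _ _ _ a b => ht a b⟩
  refine ⟨fun B => ⟨B, le_refl B, Multiset.rel_refl_of_refl_on fun x _ => hr x⟩, ?_, ?_⟩
  · rintro B B' B'' ⟨t, htB', hBt⟩ ⟨t', ht'B'', hB't'⟩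
    obtain ⟨c, hc⟩ := Multiset.le_iff_exists_add.mp htB'
    rw [hc, Multiset.rel_add_left] at hB't'
    obtain ⟨b₁, b₂, hrelt, -, hb⟩ := hB't'
    exact ⟨b₁, le_trans (hb ▸ Multiset.le_add_right _ _) ht'B'',
      Multiset.Rel.trans r hBt hrelt⟩
  · intro f
    have hpwo : (Set.univ : Set α).PartiallyWellOrderedOn r := Set.partiallyWellOrderedOn_iff_exists_lt.mpr fun g _ => hseq g
    haveI : IsPreorder α r := {}
    have hlist := Set.partiallyWellOrderedOn_iff_exists_lt.mp (hpwo.partiallyWellOrderedOn_sublistForall₂ r)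
    obtain ⟨i, j, hij, hrel⟩ := hlist (fun n => (f n).toList) (fun n => by simp)
    obtain ⟨l', hforall, hsub⟩ := List.sublistForall₂_iff.mp hrel
    refine ⟨i, j, hij, (l' : Multiset α), ?_, ?_⟩
    · rw [← Multiset.coe_toList (f j)]
      exact Multiset.coe_le.mpr hsub.subperm
    · rw [← Multiset.coe_toList (f i)]
      exact forall₂_to_rel hforall
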